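/- arXiv:2412.11630 — 2 statements merged into one kernel-verified Lean document; each statement's English description precedes it below -/
import Mathlib

section
/- Let f : ℝⁿ → ℝ, λ > 0, κ_f > 0 and f_k ∈ ℝ. Let s* ∈ ℝᵐ satisfy the decrease condition φ̃(s*) − φ̃(0) ≤ −(λ‖g‖/2)‖s*‖², and let s_k ∈ ℝⁿ satisfy the compatibility condition ⟨g, s_k⟩ = ⟨Rg, s*⟩. Assume the linear model m(y) = f_k + ⟨g, y − x⟩ is accurate at the two points, i.e. |f(x) − f_k| ≤ κ_f/λ² and |f(x + s_k) − (f_k + ⟨g, s_k⟩)| ≤ κ_f/λ². Then f(x + s_k) − f(x) ≤ 2κ_f/λ² + ((L_φ − λ‖g‖)/2)·‖s*‖². -/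
open RealInnerProductSpace

lemma descent_aux {E : Type*} [NormedAddCommGroup E] [InnerProductSpace ℝ E]
    [CompleteSpace E]
    (φ : E → ℝ) (hφ : Differentiable ℝ φ) (L : ℝ)
    (hLip : ∀ a b : E, ‖gradient φ a - gradient φ b‖ ≤ L * ‖a - b‖)
    (a v : E) :
    ⟪gradient φ a, v⟫ - L / 2 * ‖v‖ ^ 2 ≤ φ (a + v) - φ a := by
  set ψ : ℝ → ℝ := fun t => φ (a + t • v) - t * ⟪gradient φ a, v⟫ + L * t ^ 2 / 2 * ‖v‖ ^ 2
    with hψ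
  have hc : ∀ t : ℝ, HasDerivAt (fun t : ℝ => a + t • v) v t := fun t =>
    by simpa using ((hasDerivAt_id t).smul_const v).const_add a
  have hder : ∀ t : ℝ, HasDerivAt ψ
      (⟪gradient φ (a + t • v), v⟫ - ⟪gradient φ a, v⟫ + L * t * ‖v‖ ^ 2) t := by
    intro t
    have h1 : HasDerivAt (fun t : ℝ => φ (a + t • v)) ⟪gradient φ (a + t • v), v⟫ t := by
      have := ((hφ (a + t • v)).hasGradientAt).hasFDerivAt.comp_hasDerivAt t (hc t)
      simpa [Function.comp_def] using this
    have h2 : HasDerivAt (fun t : ℝ => t * ⟪gradient φ a, v⟫) ⟪gradient φ a, v⟫ t := by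
      simpa using (hasDerivAt_id t).mul_const ⟪gradient φ a, v⟫
    have h3 : HasDerivAt (fun t : ℝ => L * t ^ 2 / 2 * ‖v‖ ^ 2) (L * t * ‖v‖ ^ 2) t := by
      have : HasDerivAt (fun t : ℝ => t ^ 2) (2 * t) t := by
        simpa using hasDerivAt_pow 2 t
      have := ((this.const_mul L).div_const 2).mul_const (‖v‖ ^ 2)
      rw [show L * t * ‖v‖ ^ 2 = L * (2 * t) / 2 * ‖v‖ ^ 2 by ring]
      exact this
    exact (h1.sub h2).add h3
  have hmono : MonotoneOn ψ (Set.Icc (0:ℝ) 1) := by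
    apply monotoneOn_of_deriv_nonneg (convex_Icc 0 1)
    · exact (Differentiable.continuous fun t => (hder t).differentiableAt).continuousOn
    · intro t ht
      exact (hder t).differentiableAt.differentiableWithinAt
    · intro t ht
      rw [(hder t).deriv]
      have ht' : t ∈ Set.Ioo (0:ℝ) 1 := by rwa [interior_Icc] at ht
      have hineq : ⟪gradient φ a, v⟫ - ⟪gradient φ (a + t • v), v⟫ ≤ L * t * ‖v‖ ^ 2 := by
        have h1 : ⟪gradient φ a - gradient φ (a + t • v), v⟫ ≤
            ‖gradient φ a - gradient φ (a + t • v)‖ * ‖v‖ :=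
          real_inner_le_norm _ _
        have h2 : ‖gradient φ a - gradient φ (a + t • v)‖ ≤ L * (t * ‖v‖) := by
          have := hLip a (a + t • v)
          simpa [norm_smul, abs_of_pos ht'.1, mul_assoc] using this
        have h3 : ‖gradient φ a - gradient φ (a + t • v)‖ * ‖v‖ ≤ L * (t * ‖v‖) * ‖v‖ :=
          mul_le_mul_of_nonneg_right h2 (norm_nonneg _)
        rw [inner_sub_left] at h1
        nlinarith [norm_nonneg v]
      linarith
  have := hmono (Set.mem_Icc.2 ⟨le_rfl, zero_le_one⟩) (Set.mem_Icc.2 ⟨zero_le_one, le_rfl⟩)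
    zero_le_one
  simp only [hψ, zero_smul, add_zero, zero_mul, one_smul, one_mul, one_pow] at this
  nlinarith

/-- Decrease of `f` along a coarse step: with the decrease
condition on `s*`, the compatibility condition `⟪g, s_k⟫ = ⟪Rg, s*⟫` and
fully-linear accuracy of the fine model at the two points,
`f(x+s_k) − f(x) ≤ 2κ_f/λ² + ((L_φ − λ‖g‖)/2)‖s*‖²`. -/
theorem stmt_6 (n m : ℕ) (hn : 0 < n) (hm : 0 < m)
    (φ : EuclideanSpace ℝ (Fin m) → ℝ) (hφ : Differentiable ℝ φ)
    (Lφ : ℝ) (hLφ : 0 < Lφ)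
    (hLip : ∀ a b : EuclideanSpace ℝ (Fin m),
      ‖gradient φ a - gradient φ b‖ ≤ Lφ * ‖a - b‖)
    (x g : EuclideanSpace ℝ (Fin n))
    (R : EuclideanSpace ℝ (Fin n) →ₗ[ℝ] EuclideanSpace ℝ (Fin m))
    (φt : EuclideanSpace ℝ (Fin m) → ℝ)
    (hφt : ∀ s, φt s = φ (R x + s) + ⟪R g - gradient φ (R x), s⟫)
    (f : EuclideanSpace ℝ (Fin n) → ℝ)
    (lam κf fk : ℝ) (hlam : 0 < lam) (hκf : 0 < κf)
    (sstar : EuclideanSpace ℝ (Fin m))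
    (hdecr : φt sstar - φt 0 ≤ -(lam * ‖g‖ / 2) * ‖sstar‖ ^ 2)
    (sk : EuclideanSpace ℝ (Fin n))
    (hcompat : ⟪g, sk⟫ = ⟪R g, sstar⟫)
    (hacc0 : |f x - fk| ≤ κf / lam ^ 2)
    (haccs : |f (x + sk) - (fk + ⟪g, sk⟫)| ≤ κf / lam ^ 2) :
    f (x + sk) - f x ≤ 2 * κf / lam ^ 2 + (Lφ - lam * ‖g‖) / 2 * ‖sstar‖ ^ 2 := by
  have hdesc := descent_aux φ hφ Lφ hLip (R x) sstar
  have hφt0 : φt 0 = φ (R x) := by simp [hφt]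
  have hφts : φt sstar = φ (R x + sstar) + ⟪R g - gradient φ (R x), sstar⟫ := hφt sstar
  rw [inner_sub_left] at hφts
  have hRg : ⟪R g, sstar⟫ ≤ (Lφ - lam * ‖g‖) / 2 * ‖sstar‖ ^ 2 := by nlinarith
  have h1 := abs_le.1 hacc0
  have h2 := abs_le.1 haccs
  rw [hcompat] at h2
  have : 2 * κf / lam ^ 2 = κf / lam ^ 2 + κf / lam ^ 2 := by ring
  linarith [h1.1, h1.2, h2.1, h2.2]
end

section
/- Let f : ℝⁿ → ℝ be differentiable, λ > 0, θ > 0, κ_f > 0, κ_g ≥ 0, κ_H ∈ (0,1] and f_k ∈ ℝ. Let s* ∈ ℝᵐ satisfy the stopping condition ‖∇φ̃(s*) + λ‖g‖·s*‖ ≤ θ‖s*‖ and the decrease condition φ̃(s*) − φ̃(0) ≤ −(λ‖g‖/2)‖s*‖², let the restriction condition ‖Rg‖ ≥ κ_H‖g‖ hold, and let s_k ∈ ℝⁿ satisfy the compatibility condition ⟨g, s_k⟩ = ⟨Rg, s*⟩. Assume the linear model m(y) = f_k + ⟨g, y − x⟩ is accurate at the two points, i.e. |f(x) − f_k| ≤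 κ_f/λ² and |f(x + s_k) − (f_k + ⟨g, s_k⟩)| ≤ κ_f/λ², that the gradient estimate is accurate, i.e. ‖∇f(x) − g‖ ≤ κ_g/λ, and that λ‖∇f(x)‖ ≥ max{L_φ + θ + κ_g, 64κ_f/κ_H² + κ_g, 2L_φ + κ_g}. Then f(x + s_k) − f(x) ≤ −C₁·‖∇f(x)‖/λ, where C₁ = (κ_H²/32)·max{(L_φ + θ)/(L_φ + θ + κ_g), 64κ_f/(64κ_f + κ_g·κ_H²), 2L_φ/(2L_φ + κ_g)}. -/
open RealInnerProductSpace

set_option maxHeartbeats 1000000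

section Helpers

open InnerProductSpace

variable {H : Type*} [NormedAddCommGroup H] [InnerProductSpace ℝ H] [CompleteSpace H]

lemma grad_shift_inner (φ : H → ℝ) (hφ : Differentiable ℝ φ) (x0 c : H) (s : H) :
    HasGradientAt (fun s => φ (x0 + s) + ⟪c, s⟫_ℝ) (gradient φ (x0 + s) + c) s := by
  rw [hasGradientAt_iff_hasFDerivAt]
  have h1 : HasFDerivAt φ (toDual ℝ H (gradient φ (x0 + s))) (x0 + s) :=
    ((hφ (x0 + s)).hasGradientAt).hasFDerivAt
  have h2 : HasFDerivAt (fun s : H => x0 + s) (ContinuousLinearMap.id ℝ H) s :=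
    (hasFDerivAt_id s).const_add x0
  have h3 := (h1.comp s h2).add ((innerSL ℝ c).hasFDerivAt (x := s))
  refine h3.congr_fderiv ?_
  ext y
  simp [toDual_apply_apply, inner_add_left]

lemma descent_lower (f : H → ℝ) (hf : Differentiable ℝ f) (L : ℝ)
    (hLip : ∀ a b : H, ‖gradient f a - gradient f b‖ ≤ L * ‖a - b‖) (v : H) :
    ⟪gradient f 0, v⟫_ℝ - L / 2 * ‖v‖ ^ 2 ≤ f v - f 0 := by
  set u : ℝ → ℝ := fun t => f (t • v) - t * ⟪gradient f 0, v⟫_ℝ + L * ‖v‖ ^ 2 * t ^ 2 / 2 with hu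
  have hderiv : ∀ t : ℝ, HasDerivAt u
      (⟪gradient f (t • v), v⟫_ℝ - ⟪gradient f 0, v⟫_ℝ + L * ‖v‖ ^ 2 * t) t := by
    intro t
    have h1 : HasFDerivAt f (toDual ℝ H (gradient f (t • v))) (t • v) :=
      ((hf (t • v)).hasGradientAt).hasFDerivAt
    have h2 : HasDerivAt (fun t : ℝ => t • v) v t := by
      simpa using (hasDerivAt_id t).smul_const v
    have h3 : HasDerivAt (fun t : ℝ => f (t • v)) (⟪gradient f (t • v), v⟫_ℝ) t := by
      have h := h1.comp_hasDerivAt t h2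
      rw [toDual_apply_apply] at h
      exact h
    have h4 : HasDerivAt (fun t : ℝ => t * ⟪gradient f 0, v⟫_ℝ) ⟪gradient f 0, v⟫_ℝ t := by
      simpa using (hasDerivAt_id t).mul_const _
    have h5 : HasDerivAt (fun t : ℝ => L * ‖v‖ ^ 2 * t ^ 2 / 2) (L * ‖v‖ ^ 2 * t) t := by
      have := ((hasDerivAt_pow 2 t).const_mul (L * ‖v‖ ^ 2)).div_const 2
      exact this.congr_deriv (by ring)
    exact (h3.sub h4).add h5
  have hmono : MonotoneOn u (Set.Icc 0 1) := by
    apply monotoneOn_of_deriv_nonneg (convex_Icc 0 1)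
    · exact fun t _ => (hderiv t).continuousAt.continuousWithinAt
    · exact fun t _ => ((hderiv t).differentiableAt).differentiableWithinAt
    · intro t ht
      rw [interior_Icc] at ht
      rw [(hderiv t).deriv]
      have hb : ‖gradient f (t • v) - gradient f 0‖ ≤ L * (t * ‖v‖) := by
        have := hLip (t • v) 0
        simpa [norm_smul, abs_of_pos ht.1] using this
      have hip : ⟪gradient f (t • v) - gradient f 0, v⟫_ℝ ≥ -(L * (t * ‖v‖) * ‖v‖) := by
        have h := abs_real_inner_le_norm (gradient f (t • v) - gradient f 0) v
        have := neg_abs_le ⟪gradient f (t • v) - gradient f 0, v⟫_ℝ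
        nlinarith [norm_nonneg v]
      rw [inner_sub_left] at hip
      nlinarith
  have := hmono (Set.left_mem_Icc.2 zero_le_one) (Set.right_mem_Icc.2 zero_le_one) zero_le_one
  simp only [hu] at this
  simp only [zero_smul, one_smul, zero_mul, one_pow, mul_one] at this
  nlinarith

end Helpers

/-- Guaranteed decrease of `f` along a coarse step, stated
in terms of the true gradient `∇f(x)`. -/
theorem stmt_10 (n m : ℕ) (hn : 0 < n) (hm : 0 < m)
    (φ : EuclideanSpace ℝ (Fin m) → ℝ) (hφ : Differentiable ℝ φ)
    (Lφ : ℝ) (hLφ : 0 < Lφ)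
    (hLip : ∀ a b : EuclideanSpace ℝ (Fin m),
      ‖gradient φ a - gradient φ b‖ ≤ Lφ * ‖a - b‖)
    (x g : EuclideanSpace ℝ (Fin n))
    (R : EuclideanSpace ℝ (Fin n) →ₗ[ℝ] EuclideanSpace ℝ (Fin m))
    (φt : EuclideanSpace ℝ (Fin m) → ℝ)
    (hφt : ∀ s, φt s = φ (R x + s) + ⟪R g - gradient φ (R x), s⟫)
    (f : EuclideanSpace ℝ (Fin n) → ℝ) (hf : Differentiable ℝ f)
    (lam θ κf κg κH fk : ℝ)
    (hlam : 0 < lam) (hθ : 0 < θ) (hκf : 0 < κf) (hκg : 0 ≤ κg)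
    (hκH : κH ∈ Set.Ioc (0 : ℝ) 1)
    (sstar : EuclideanSpace ℝ (Fin m))
    (hstop : ‖gradient φt sstar + (lam * ‖g‖) • sstar‖ ≤ θ * ‖sstar‖)
    (hdecr : φt sstar - φt 0 ≤ -(lam * ‖g‖ / 2) * ‖sstar‖ ^ 2)
    (hrestr : ‖R g‖ ≥ κH * ‖g‖)
    (sk : EuclideanSpace ℝ (Fin n))
    (hcompat : ⟪g, sk⟫ = ⟪R g, sstar⟫)
    (hacc0 : |f x - fk| ≤ κf / lam ^ 2)
    (haccs : |f (x + sk) - (fk + ⟪g, sk⟫)| ≤ κf / lam ^ 2)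
    (hgrad : ‖gradient f x - g‖ ≤ κg / lam)
    (hbig : lam * ‖gradient f x‖ ≥
      max (max (Lφ + θ + κg) (64 * κf / κH ^ 2 + κg)) (2 * Lφ + κg)) :
    f (x + sk) - f x ≤
      -(κH ^ 2 / 32 *
          max (max ((Lφ + θ) / (Lφ + θ + κg)) (64 * κf / (64 * κf + κg * κH ^ 2)))
            (2 * Lφ / (2 * Lφ + κg))) *
        (‖gradient f x‖ / lam) := by
  obtain ⟨hκH0, hκH1⟩ := hκH
  set G := ‖gradient f x‖ with hG
  set ng := ‖g‖ with hng
  set ns := ‖sstar‖ with hns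
  have hGnn : 0 ≤ G := norm_nonneg _
  have hngnn : 0 ≤ ng := norm_nonneg _
  have hnsnn : 0 ≤ ns := norm_nonneg _
  -- components of hbig
  have hb1 : Lφ + θ + κg ≤ lam * G := le_trans (le_trans (le_max_left _ _) (le_max_left _ _)) hbig
  have hb2 : 64 * κf / κH ^ 2 + κg ≤ lam * G :=
    le_trans (le_trans (le_max_right _ _) (le_max_left _ _)) hbig
  have hb3 : 2 * Lφ + κg ≤ lam * G := le_trans (le_max_right _ _) hbig
  have hb2' : 64 * κf + κg * κH ^ 2 ≤ lam * G * κH ^ 2 := by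
    have h := mul_le_mul_of_nonneg_right hb2 (sq_nonneg κH)
    have hκH2 : (κH : ℝ) ^ 2 ≠ 0 := by positivity
    rw [add_mul, div_mul_cancel₀ _ hκH2] at h
    linarith
  -- lower bound on ng
  have hGg : G - ng ≤ κg / lam :=
    le_trans (le_trans (le_abs_self _) (abs_norm_sub_norm_le _ _)) hgrad
  have hngl : lam * G - κg ≤ lam * ng := by
    have := (le_div_iff₀ hlam).mp hGg
    nlinarith
  have hngpos : 0 < ng := by nlinarith
  -- gradient of φt
  obtain rfl : φt = fun s => φ (R x + s) + ⟪R g - gradient φ (R x), s⟫ := funext hφt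
  set c : EuclideanSpace ℝ (Fin m) := R g - gradient φ (R x) with hc
  set φt : EuclideanSpace ℝ (Fin m) → ℝ := fun s => φ (R x + s) + ⟪c, s⟫ with hφtdef
  have hgφt : ∀ s, gradient φt s = gradient φ (R x + s) + c :=
    fun s => (grad_shift_inner φ hφ (R x) c s).gradient
  have hgrad0 : gradient φt 0 = R g := by
    rw [hgφt 0, add_zero, hc]; abel
  have hLipφt : ∀ a b, ‖gradient φt a - gradient φt b‖ ≤ Lφ * ‖a - b‖ := by
    intro a b
    rw [hgφt a, hgφt b, add_sub_add_right_eq_sub]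
    simpa [add_sub_add_left_eq_sub] using hLip (R x + a) (R x + b)
  -- lower bound on ns
  have h5 : κH * ng ≤ (Lφ + θ + lam * ng) * ns := by
    have e : (gradient φt 0 - gradient φt sstar) + (gradient φt sstar + (lam * ng) • sstar)
        - (lam * ng) • sstar = R g := by rw [hgrad0]; abel
    have h51 : ‖R g‖ ≤ ‖gradient φt 0 - gradient φt sstar‖
        + ‖gradient φt sstar + (lam * ng) • sstar‖ + ‖(lam * ng) • sstar‖ := by
      rw [← e]
      exact le_trans (norm_sub_le _ _) (by gcongr; exact norm_add_le _ _)
    have h52 : ‖gradient φt 0 - gradient φt sstar‖ ≤ Lφ * ns := by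
      simpa using hLipφt 0 sstar
    have h53 : ‖(lam * ng) • sstar‖ = lam * ng * ns := by
      rw [norm_smul, Real.norm_eq_abs, abs_of_nonneg (by positivity)]
    linarith [hrestr, hstop, h51, h52, h53]
  have hnsl : κH ≤ 2 * lam * ns := by
    nlinarith [h5, mul_le_mul_of_nonneg_right (show Lφ + θ ≤ lam * ng by linarith) hnsnn, hngpos]
  -- inner product bound
  have hdesc := descent_lower φt (by
      intro s
      exact ((hφ (R x + s)).comp s ((differentiable_id.const_add (R x)) s)).add
        ((innerSL ℝ c).differentiable s)) Lφ hLipφt sstar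
  rw [hgrad0] at hdesc
  have hRgs : ⟪R g, sstar⟫ ≤ -(κH ^ 2 * ng / (16 * lam)) := by
    have h1 : ⟪R g, sstar⟫ ≤ (Lφ / 2 - lam * ng / 2) * ns ^ 2 := by nlinarith [hdesc, hdecr]
    have key : κH ^ 2 * ng / (16 * lam) ≤ (lam * ng / 2 - Lφ / 2) * ns ^ 2 := by
      rw [div_le_iff₀ (by positivity)]
      have h2 : κH ^ 2 ≤ 4 * lam ^ 2 * ns ^ 2 := by nlinarith [hnsl, hnsnn, hκH0, hlam]
      nlinarith [mul_le_mul_of_nonneg_left h2 hngnn,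
        mul_nonneg (mul_nonneg (by nlinarith : (0:ℝ) ≤ lam * ng - 2 * Lφ) hlam.le)
          (sq_nonneg ns)]
    linarith
  -- model chain
  have habs0 := abs_le.mp hacc0
  have habss := abs_le.mp haccs
  have hchain : f (x + sk) - f x ≤ ⟪R g, sstar⟫ + 2 * κf / lam ^ 2 := by
    have e1 := habs0.1
    have e2 := habss.2
    rw [hcompat] at e2
    have : (2:ℝ) * κf / lam ^ 2 = κf / lam ^ 2 + κf / lam ^ 2 := by ring
    rw [this]
    linarith
  -- the max quantity
  set α := (Lφ + θ) / (Lφ + θ + κg) with hα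
  set β := 64 * κf / (64 * κf + κg * κH ^ 2) with hβ
  set γ := 2 * Lφ / (2 * Lφ + κg) with hγ
  set M := max (max α β) γ with hM
  have hD1 : (0:ℝ) < Lφ + θ + κg := by positivity
  have hD2 : (0:ℝ) < 64 * κf + κg * κH ^ 2 := by positivity
  have hD3 : (0:ℝ) < 2 * Lφ + κg := by positivity
  have hαG : α * G ≤ ng := by
    rw [hα, div_mul_eq_mul_div, div_le_iff₀ hD1]
    have hmul : lam * ((Lφ + θ) * G) ≤ lam * (ng * (Lφ + θ + κg)) := by
      linarith [mul_nonneg hκg (show (0:ℝ) ≤ lam * G - (Lφ + θ + κg) by linarith),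
        mul_le_mul_of_nonneg_right hngl hD1.le]
    exact le_of_mul_le_mul_left hmul hlam
  have hβG : β * G ≤ ng := by
    rw [hβ, div_mul_eq_mul_div, div_le_iff₀ hD2]
    have hmul : lam * (64 * κf * G) ≤ lam * (ng * (64 * κf + κg * κH ^ 2)) := by
      linarith [mul_nonneg hκg (show (0:ℝ) ≤ lam * G * κH ^ 2 - (64 * κf + κg * κH ^ 2) by linarith),
        mul_le_mul_of_nonneg_right hngl hD2.le]
    exact le_of_mul_le_mul_left hmul hlam
  have hγG : γ * G ≤ ng := by
    rw [hγ, div_mul_eq_mul_div, div_le_iff₀ hD3]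
    have hmul : lam * (2 * Lφ * G) ≤ lam * (ng * (2 * Lφ + κg)) := by
      linarith [mul_nonneg hκg (show (0:ℝ) ≤ lam * G - (2 * Lφ + κg) by linarith),
        mul_le_mul_of_nonneg_right hngl hD3.le]
    exact le_of_mul_le_mul_left hmul hlam
  have hc3 : G * M ≤ ng := by
    rw [mul_comm, hM, max_mul_of_nonneg _ _ hGnn, max_mul_of_nonneg _ _ hGnn]
    exact max_le (max_le hαG hβG) hγG
  have hβleM : β ≤ M := le_trans (le_max_right α β) (le_max_left _ γ)
  have hGMnn : 0 ≤ G * M := le_trans (mul_nonneg hGnn (le_trans (by positivity) hβleM)) le_rfl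
  -- bound on the model error term
  have hc4 : 2 * κf / lam ^ 2 ≤ κH ^ 2 * (G * M) / (32 * lam) := by
    have hc4β : 2 * κf / lam ^ 2 ≤ κH ^ 2 * (G * β) / (32 * lam) := by
      rw [div_le_div_iff₀ (by positivity) (by positivity)]
      have heq : κH ^ 2 * (G * β) * lam ^ 2
          = κH ^ 2 * G * (64 * κf) * lam ^ 2 / (64 * κf + κg * κH ^ 2) := by
        rw [hβ]; ring
      rw [heq, le_div_iff₀ hD2]
      linarith [mul_le_mul_of_nonneg_left hb2' (show (0:ℝ) ≤ 64 * κf * lam by positivity)]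
    refine le_trans hc4β ?_
    gcongr
  -- conclusion
  have hc2' : -(κH ^ 2 * ng / (16 * lam)) ≤ -(κH ^ 2 * (G * M) / (16 * lam)) := by
    apply neg_le_neg
    gcongr κH ^ 2 * ?_ / (16 * lam)
  have heq : -(κH ^ 2 / 32 * M) * (G / lam)
      = -(κH ^ 2 * (G * M) / (16 * lam)) + κH ^ 2 * (G * M) / (32 * lam) := by ring
  rw [heq]
  linarith
end
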